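/- arXiv:2604.03856 — 2 statements merged into one kernel-verified Lean document; each statement's English description precedes it below -/
import Mathlib

section
/- (Solvability of the Galerkin system) Let m ∈ ℕ, let α > 0, let λ₁, …, λ_m be positive real numbers, and let b₁, …, b_m be arbitrary real numbers. Then there exists ξ = (ξ₁, …, ξ_m) ∈ ℝ^m such that for every i ∈ {1, …, m}: α²·λ_i·ξ_i + ξ_i + α·(Σ_{j=1}^m λ_j·ξ_j²)·λ_i·ξ_i = b_i. -/
/-- Solvability of the Galerkin system: for `α > 0`, positive `λ₁,…,λ_m` and arbitrary
`b₁,…,b_m`, there exists `ξ ∈ ℝ^m` with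
`α² λᵢ ξᵢ + ξᵢ + α (Σⱼ λⱼ ξⱼ²) λᵢ ξᵢ = bᵢ` for every `i`. -/
theorem galerkin_system_solvable (m : ℕ) (α : ℝ) (hα : 0 < α)
    (lam : Fin m → ℝ) (hlam : ∀ i, 0 < lam i) (b : Fin m → ℝ) :
    ∃ ξ : Fin m → ℝ, ∀ i : Fin m,
      α ^ 2 * lam i * ξ i + ξ i + α * (∑ j, lam j * (ξ j) ^ 2) * lam i * ξ i = b i := by
  set F : ℝ → ℝ := fun s => ∑ j, lam j * (b j / (α ^ 2 * lam j + 1 + α * s * lam j)) ^ 2 with hF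
  have hd : ∀ s : ℝ, 0 ≤ s → ∀ j, 0 < α ^ 2 * lam j + 1 + α * s * lam j := by
    intro s hs j
    have h1 := hlam j
    nlinarith [sq_nonneg α, mul_pos hα h1, mul_nonneg hs (mul_pos hα h1).le]
  have hF0 : 0 ≤ F 0 := by
    apply Finset.sum_nonneg
    intro j _
    exact mul_nonneg (hlam j).le (sq_nonneg _)
  have hmono : F (F 0) ≤ F 0 := by
    apply Finset.sum_le_sum
    intro j _
    have h0 := hd 0 le_rfl j
    have hM := hd (F 0) hF0 j
    have hle : α ^ 2 * lam j + 1 + α * 0 * lam j ≤ α ^ 2 * lam j + 1 + α * (F 0) * lam j := by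
      nlinarith [mul_nonneg hF0 (mul_pos hα (hlam j)).le]
    rw [div_pow, div_pow]
    apply mul_le_mul_of_nonneg_left _ (hlam j).le
    exact div_le_div_of_nonneg_left (sq_nonneg _) (by positivity) (pow_le_pow_left₀ h0.le hle 2)
  have hcont : ContinuousOn (fun s => s - F s) (Set.Icc 0 (F 0)) := by
    apply ContinuousOn.sub continuousOn_id
    apply continuousOn_finset_sum
    intro j _
    apply ContinuousOn.mul continuousOn_const
    apply ContinuousOn.pow
    apply ContinuousOn.div continuousOn_const
    · fun_prop
    · intro s hs
      exact (hd s hs.1 j).ne'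
  have hIVT := intermediate_value_Icc hF0 hcont
  have h0mem : (0 : ℝ) ∈ Set.Icc ((fun s => s - F s) 0) ((fun s => s - F s) (F 0)) := by
    constructor
    · simp only []
      linarith
    · simp only []
      linarith
  obtain ⟨s, hsmem, hseq⟩ := hIVT h0mem
  have hs0 : 0 ≤ s := hsmem.1
  have hsF : s = F s := by
    simp only [] at hseq
    linarith
  refine ⟨fun j => b j / (α ^ 2 * lam j + 1 + α * s * lam j), fun i => ?_⟩
  have hsum : (∑ j, lam j * (b j / (α ^ 2 * lam j + 1 + α * s * lam j)) ^ 2) = s := by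
    conv_rhs => rw [hsF]
  rw [hsum]
  have hdi := hd s hs0 i
  have key : (α ^ 2 * lam i + 1 + α * s * lam i) * (b i / (α ^ 2 * lam i + 1 + α * s * lam i)) = b i :=
    mul_div_cancel₀ _ hdi.ne'
  linear_combination key
end

section
/- (Single-valuedness and uniform continuity of the duality map on bounded sets) Let X be a real normed space whose topological dual X' is uniformly convex. For x ∈ X call f ∈ X' an element of F x if f(x) = ‖x‖² and ‖f‖ = ‖x‖. Then for every ε > 0 and M > 0 there exists δ > 0 such that for all x, y ∈ X with ‖x‖ < M and ‖x − y‖ < δ, and all continuous linear functionals f, g on X with f(x) = ‖x‖², ‖f‖ = ‖x‖, g(y) = ‖y‖², ‖g‖ = ‖y‖, one has ‖f − g‖ < ε. In particular (taking x = y), F x contains at most one element, i.e., F is single-valued. -/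
/-- Single-valuedness and uniform continuity of the duality map on bounded sets:
if the topological dual of a real normed space `X` is uniformly convex, then for every
`ε > 0` and `M > 0` there is `δ > 0` such that whenever `‖x‖ < M`, `‖x − y‖ < δ`,
and `f, g` are continuous linear functionals with `f x = ‖x‖²`, `‖f‖ = ‖x‖`,
`g y = ‖y‖²`, `‖g‖ = ‖y‖`, one has `‖f − g‖ < ε`. In particular (taking `x = y`)
the duality map is single-valued. -/
theorem duality_map_uniformly_continuous {X : Type*} [NormedAddCommGroup X]
    [NormedSpace ℝ X] [UniformConvexSpace (StrongDual ℝ X)] :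
    ∀ ε > (0 : ℝ), ∀ M > (0 : ℝ), ∃ δ > (0 : ℝ),
      ∀ (x y : X) (f g : StrongDual ℝ X),
        ‖x‖ < M → ‖x - y‖ < δ →
        f x = ‖x‖ ^ 2 → ‖f‖ = ‖x‖ →
        g y = ‖y‖ ^ 2 → ‖g‖ = ‖y‖ →
        ‖f - g‖ < ε := by
  intro ε hε M hM
  set ε₀ : ℝ := min ε M with hε₀def
  have hε₀pos : 0 < ε₀ := lt_min hε hM
  have hε₀ε : ε₀ ≤ ε := min_le_left _ _
  have hε₀M : ε₀ ≤ M := min_le_right _ _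
  obtain ⟨δ', hδ'pos, hδ'⟩ := exists_forall_closed_ball_dist_add_le_two_sub
    (StrongDual ℝ X) (show (0:ℝ) < ε₀ / (2*M) by positivity)
  refine ⟨min (ε₀/3) (ε₀*δ'/6), by positivity, ?_⟩
  intro x y f g hxM hxy hfx hfnorm hgy hgnorm
  set δ : ℝ := min (ε₀/3) (ε₀*δ'/6) with hδdef
  have hδ3 : δ ≤ ε₀/3 := min_le_left _ _
  have hδ6 : δ ≤ ε₀*δ'/6 := min_le_right _ _
  have habs : |‖x‖ - ‖y‖| < δ := lt_of_le_of_lt (abs_norm_sub_norm_le x y) hxy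
  have habs1 : ‖x‖ - ‖y‖ < δ := lt_of_le_of_lt (le_abs_self _) habs
  have habs2 : ‖y‖ - ‖x‖ < δ := lt_of_le_of_lt (neg_le_abs _ |>.trans_eq' (by ring)) habs
  by_cases hx : ‖x‖ ≤ ε₀/3
  · -- small case: both functionals are small
    calc ‖f - g‖ ≤ ‖f‖ + ‖g‖ := norm_sub_le _ _
      _ = ‖x‖ + ‖y‖ := by rw [hfnorm, hgnorm]
      _ < ε := by linarith
  · push_neg at hx
    have hxpos : (0:ℝ) < ‖x‖ := lt_trans (by positivity) hx
    have hypos : (0:ℝ) < ‖y‖ := by linarith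
    set u : StrongDual ℝ X := ‖x‖⁻¹ • f with hudef
    set v : StrongDual ℝ X := ‖y‖⁻¹ • g with hvdef
    have hu : ‖u‖ = 1 := by
      rw [hudef, norm_smul, norm_inv, norm_norm, hfnorm,
        inv_mul_cancel₀ hxpos.ne']
    have hv : ‖v‖ = 1 := by
      rw [hvdef, norm_smul, norm_inv, norm_norm, hgnorm,
        inv_mul_cancel₀ hypos.ne']
    -- lower bound on (u+v) x
    have hgxy : -(‖y‖ * δ) < g (x - y) := by
      have h1 : |g (x - y)| ≤ ‖g‖ * ‖x - y‖ := by
        simpa using (g.le_opNorm (x - y))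
      have h2 : ‖g‖ * ‖x - y‖ < ‖y‖ * δ := by
        rw [hgnorm]; exact mul_lt_mul_of_pos_left hxy hypos
      have h3 := (abs_le.mp h1).1
      linarith
    have huvx : ‖x‖ + ‖y‖ - δ < (u + v) x := by
      have hux : u x = ‖x‖ := by
        rw [hudef]; simp only [ContinuousLinearMap.smul_apply, smul_eq_mul, hfx]
        field_simp
      have hgx : g x = ‖y‖ ^ 2 + g (x - y) := by
        have : g x = g y + g (x - y) := by
          rw [← ContinuousLinearMap.map_add]; congr 1; abel
        rw [this, hgy]
      have hvx : ‖y‖ - δ < v x := by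
        rw [hvdef]; simp only [ContinuousLinearMap.smul_apply, smul_eq_mul, hgx]
        rw [mul_add]
        have e1 : ‖y‖⁻¹ * ‖y‖ ^ 2 = ‖y‖ := by field_simp
        have e2 : -δ < ‖y‖⁻¹ * g (x - y) := by
          have := mul_lt_mul_of_pos_left hgxy (inv_pos.mpr hypos)
          calc -δ = ‖y‖⁻¹ * (-(‖y‖ * δ)) := by field_simp
            _ < ‖y‖⁻¹ * g (x - y) := this
        linarith [e1 ▸ e2]
      have : (u + v) x = u x + v x := rfl
      rw [this, hux]; linarith
    have hbound : ‖x‖ + ‖y‖ - δ < ‖u + v‖ * ‖x‖ := by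
      have h1 : (u + v) x ≤ |(u + v) x| := le_abs_self _
      have h2 : |(u + v) x| ≤ ‖u + v‖ * ‖x‖ := by
        simpa using (u + v).le_opNorm x
      linarith
    -- uniform convexity gives ‖u - v‖ small
    have huv : ‖u - v‖ < ε₀ / (2*M) := by
      by_contra h
      push_neg at h
      have h2 : ‖u + v‖ ≤ 2 - δ' := hδ' hu.le hv.le h
      have h3 : ‖u + v‖ * ‖x‖ ≤ (2 - δ') * ‖x‖ :=
        mul_le_mul_of_nonneg_right h2 hxpos.le
      -- (2 - δ')‖x‖ ≥ ‖x‖ + ‖y‖ - δ > 2‖x‖ - 2δ ⇒ δ'‖x‖ < 2δ ≤ ε₀δ'/3 ⇒ ‖x‖ < ε₀/3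
      rw [sub_mul] at h3
      have h4 : δ' * ‖x‖ < 2 * δ := by linarith only [hbound, h3, habs1]
      have h5 : δ' * ‖x‖ > δ' * (ε₀/3) := mul_lt_mul_of_pos_left hx hδ'pos
      linarith only [h4, h5, hδ6]
    have hfu : f = ‖x‖ • u := by
      rw [hudef, smul_smul, mul_inv_cancel₀ hxpos.ne', one_smul]
    have hgv : g = ‖y‖ • v := by
      rw [hvdef, smul_smul, mul_inv_cancel₀ hypos.ne', one_smul]
    have hsplit : f - g = ‖x‖ • (u - v) + (‖x‖ - ‖y‖) • v := by
      rw [hfu, hgv, smul_sub]; module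
    have hfinal : ‖f - g‖ ≤ ‖x‖ * ‖u - v‖ + |‖x‖ - ‖y‖| := by
      calc ‖f - g‖ ≤ ‖‖x‖ • (u - v)‖ + ‖(‖x‖ - ‖y‖) • v‖ := by
            rw [hsplit]; exact norm_add_le _ _
        _ = ‖x‖ * ‖u - v‖ + |‖x‖ - ‖y‖| := by
            rw [norm_smul, norm_smul, Real.norm_eq_abs, Real.norm_eq_abs,
              abs_norm, hv, mul_one]
    have h6 : ‖x‖ * ‖u - v‖ < M * (ε₀ / (2*M)) := by
      calc ‖x‖ * ‖u - v‖ ≤ M * ‖u - v‖ :=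
            mul_le_mul_of_nonneg_right hxM.le (norm_nonneg _)
        _ < M * (ε₀ / (2*M)) := by
            exact mul_lt_mul_of_pos_left huv hM
    have hMhalf : M * (ε₀ / (2*M)) = ε₀ / 2 := by field_simp
    linarith
end
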